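/- Let k ≥ 2 and n ≥ 1 be integers and let ρ > 0 satisfy ρ ≤ 1/(2√n·(2√(2·ln(8k²)) + 3)). Then there is exactly one number α with 0 < α ≤ 1/2 satisfying the equation α = (2√(2·ln(2k²/α²)) + 3)·ρ·√n, and this α satisfies 3√n·ρ ≤ α ≤ min{1/2, ρ·√n·(2√(2·ln(2k²/(9·n·ρ²))) + 3)}. -/
import Mathlib


noncomputable section

/-- if `ρ ≤ 1/(2√n·(2√(2 ln(8k²)) + 3))`, then there is exactly one
`α ∈ (0, 1/2]` with `α = (2√(2 ln(2k²/α²)) + 3)·ρ·√n`, and this `α` satisfies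
`3√n·ρ ≤ α ≤ min{1/2, ρ√n·(2√(2 ln(2k²/(9nρ²))) + 3)}`. -/
theorem statement4 (k n : ℕ) (hk : 2 ≤ k) (hn : 1 ≤ n) (ρ : ℝ) (hρ : 0 < ρ)
    (hρle : ρ ≤ 1 / (2 * Real.sqrt n *
      (2 * Real.sqrt (2 * Real.log (8 * (k : ℝ)^2)) + 3))) :
    (∃! α : ℝ, (0 < α ∧ α ≤ 1/2) ∧
        α = (2 * Real.sqrt (2 * Real.log (2 * (k : ℝ)^2 / α^2)) + 3) * ρ * Real.sqrt n) ∧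
    ∀ α : ℝ, (0 < α ∧ α ≤ 1/2) →
      α = (2 * Real.sqrt (2 * Real.log (2 * (k : ℝ)^2 / α^2)) + 3) * ρ * Real.sqrt n →
      3 * Real.sqrt n * ρ ≤ α ∧
      α ≤ min (1/2)
        (ρ * Real.sqrt n *
          (2 * Real.sqrt (2 * Real.log (2 * (k : ℝ)^2 / (9 * (n : ℝ) * ρ^2))) + 3)) := by
  have hk2 : (2:ℝ) ≤ (k:ℝ) := by exact_mod_cast hk
  have hn1 : (1:ℝ) ≤ (n:ℝ) := by exact_mod_cast hn
  set s := Real.sqrt n with hsdef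
  have hs1 : 1 ≤ s := by
    rw [hsdef, show (1:ℝ) = Real.sqrt 1 from (Real.sqrt_one).symm]
    exact Real.sqrt_le_sqrt hn1
  have hs0 : 0 < s := by linarith
  have hsq : s ^ 2 = (n:ℝ) := Real.sq_sqrt (by linarith)
  set c := 2 * Real.sqrt (2 * Real.log (8 * (k : ℝ)^2)) + 3 with hcdef
  have hc3 : 3 ≤ c := by
    have := Real.sqrt_nonneg (2 * Real.log (8 * (k : ℝ)^2)); rw [hcdef]; linarith
  have hc0 : 0 < c := by linarith
  have hcρs : c * ρ * s ≤ 1 / 2 := by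
    have hd : 0 < 2 * s * c := by positivity
    rw [le_div_iff₀ hd] at hρle
    nlinarith
  set f : ℝ → ℝ := fun α =>
    (2 * Real.sqrt (2 * Real.log (2 * (k : ℝ)^2 / α^2)) + 3) * ρ * s with hfdef
  -- monotone decreasing
  have hmono : ∀ x y : ℝ, 0 < x → x ≤ y → f y ≤ f x := by
    intro x y hx hxy
    have hy : 0 < y := lt_of_lt_of_le hx hxy
    have hk0 : (0:ℝ) < 2 * (k:ℝ)^2 := by nlinarith
    have h1 : 2 * (k:ℝ)^2 / y^2 ≤ 2 * (k:ℝ)^2 / x^2 := by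
      apply div_le_div_of_nonneg_left hk0.le (by positivity)
      nlinarith
    have h2 : Real.log (2 * (k:ℝ)^2 / y^2) ≤ Real.log (2 * (k:ℝ)^2 / x^2) :=
      Real.log_le_log (by positivity) h1
    have h3 : Real.sqrt (2 * Real.log (2 * (k:ℝ)^2 / y^2)) ≤
        Real.sqrt (2 * Real.log (2 * (k:ℝ)^2 / x^2)) :=
      Real.sqrt_le_sqrt (by linarith)
    simp only [hfdef]
    have := mul_le_mul_of_nonneg_right (mul_le_mul_of_nonneg_right
      (by linarith : 2 * Real.sqrt (2 * Real.log (2 * (k:ℝ)^2 / y^2)) + 3 ≤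
        2 * Real.sqrt (2 * Real.log (2 * (k:ℝ)^2 / x^2)) + 3) hρ.le) hs0.le
    linarith
  -- lower bound for any fixed point
  have hlow : ∀ α : ℝ, α = f α → 3 * s * ρ ≤ α := by
    intro α hα
    have h0 := Real.sqrt_nonneg (2 * Real.log (2 * (k:ℝ)^2 / α^2))
    rw [hα]; simp only [hfdef]
    nlinarith [mul_nonneg (mul_nonneg h0 hρ.le) hs0.le]
  have ha0 : 0 < 3 * s * ρ := by positivity
  -- value at the lower endpoint
  have hsqa : (3 * s * ρ)^2 = 9 * (n:ℝ) * ρ^2 := by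
    rw [show (3 * s * ρ)^2 = 9 * s^2 * ρ^2 from by ring, hsq]
  -- bounds statement
  have hbounds : ∀ α : ℝ, (0 < α ∧ α ≤ 1/2) → α = f α →
      3 * s * ρ ≤ α ∧
      α ≤ min (1/2) (ρ * s *
        (2 * Real.sqrt (2 * Real.log (2 * (k : ℝ)^2 / (9 * (n : ℝ) * ρ^2))) + 3)) := by
    intro α ⟨hα0, hαle⟩ hα
    have h1 : 3 * s * ρ ≤ α := hlow α hα
    refine ⟨h1, le_min hαle ?_⟩
    have h2 : f α ≤ f (3 * s * ρ) := hmono _ _ ha0 h1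
    rw [hα]
    calc f α ≤ f (3 * s * ρ) := h2
      _ = ρ * s * (2 * Real.sqrt (2 * Real.log (2 * (k : ℝ)^2 / (9 * (n : ℝ) * ρ^2))) + 3) := by
          simp only [hfdef, hsqa]; ring
  constructor
  · -- existence and uniqueness
    have hab : 3 * s * ρ ≤ 1/2 := by nlinarith
    have hga : 3 * s * ρ - f (3 * s * ρ) ≤ 0 := by
      have h0 := Real.sqrt_nonneg (2 * Real.log (2 * (k:ℝ)^2 / (3 * s * ρ)^2))
      simp only [hfdef]
      nlinarith [mul_nonneg (mul_nonneg h0 hρ.le) hs0.le]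
    have hgb : 0 ≤ 1/2 - f (1/2) := by
      have he : 2 * (k:ℝ)^2 / ((1:ℝ)/2)^2 = 8 * (k:ℝ)^2 := by ring
      have : f (1/2) = c * ρ * s := by simp only [hfdef, hcdef, he]
      rw [this]; linarith
    have hcont : ContinuousOn (fun α => α - f α) (Set.Icc (3 * s * ρ) (1/2)) := by
      apply ContinuousOn.sub continuousOn_id
      simp only [hfdef]
      apply ContinuousOn.mul (ContinuousOn.mul ?_ continuousOn_const) continuousOn_const
      apply ContinuousOn.add ?_ continuousOn_const
      apply ContinuousOn.mul continuousOn_const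
      apply ContinuousOn.sqrt
      apply ContinuousOn.mul continuousOn_const
      apply ContinuousOn.log
      · apply ContinuousOn.div continuousOn_const (continuousOn_pow 2)
        intro x hx
        have hx0 : 0 < x := lt_of_lt_of_le ha0 hx.1
        positivity
      · intro x hx
        have hx0 : 0 < x := lt_of_lt_of_le ha0 hx.1
        have : (0:ℝ) < 2 * (k:ℝ)^2 / x^2 := by positivity
        linarith
    obtain ⟨α, hmem, hg⟩ := intermediate_value_Icc hab hcont ⟨hga, hgb⟩
    have hαfix : α = f α := by
      have : α - f α = 0 := hg
      linarith
    have hα0 : 0 < α := lt_of_lt_of_le ha0 hmem.1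
    refine ⟨α, ⟨⟨hα0, hmem.2⟩, hαfix⟩, ?_⟩
    intro β ⟨⟨hβ0, hβle⟩, hβfix⟩
    rcases le_total β α with h | h
    · exact le_antisymm h (by rw [hαfix, hβfix]; exact hmono β α hβ0 h)
    · exact le_antisymm (by rw [hαfix, hβfix]; exact hmono α β hα0 h) h
  · exact hbounds
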